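/- Let A ∈ ℝ^{n×d} be a nonzero matrix with rows a₁,…,aₙ and rank r. Then the total sensitivity equals the rank: ∑_{i=1}^n s_A(aᵢ) = r. -/

import Mathlib

open Matrix

/-- Squared Euclidean distance from a point to a linear subspace. -/
noncomputable def muRow {d : ℕ} (x : EuclideanSpace ℝ (Fin d))
    (S : Submodule ℝ (EuclideanSpace ℝ (Fin d))) : ℝ :=
  Metric.infDist x (S : Set (EuclideanSpace ℝ (Fin d))) ^ 2

/-- Sum of squared distances of the rows of a matrix to a linear subspace. -/
noncomputable def muMat {n d : ℕ} (A : Matrix (Fin n) (Fin d) ℝ)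
    (S : Submodule ℝ (EuclideanSpace ℝ (Fin d))) : ℝ :=
  ∑ i, muRow (WithLp.toLp 2 (A i)) S

/-- Sensitivity of row `i` of `A`. -/
noncomputable def sens {n d : ℕ} (A : Matrix (Fin n) (Fin d) ℝ) (i : Fin n) : ℝ :=
  sSup {t : ℝ | ∃ S : Submodule ℝ (EuclideanSpace ℝ (Fin d)),
    Module.finrank ℝ S = d - 1 ∧ 0 < muMat A S ∧ t = muRow (WithLp.toLp 2 (A i)) S / muMat A S}

open Module Metric
open Submodule
open scoped RealInnerProductSpace

noncomputable def Tmap {n d : ℕ} (A : Matrix (Fin n) (Fin d) ℝ) :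
    EuclideanSpace ℝ (Fin d) →ₗ[ℝ] EuclideanSpace ℝ (Fin n) :=
  ((EuclideanSpace.equiv (Fin n) ℝ).symm.toLinearMap.comp A.mulVecLin).comp
    (EuclideanSpace.equiv (Fin d) ℝ).toLinearMap

theorem Tmap_apply {n d : ℕ} (A : Matrix (Fin n) (Fin d) ℝ)
    (v : EuclideanSpace ℝ (Fin d)) (j : Fin n) :
    Tmap A v j = inner (𝕜 := ℝ) (E := EuclideanSpace ℝ (Fin d)) (WithLp.toLp 2 (A j)) v := by
  simp only [Tmap, LinearMap.coe_comp, Function.comp_apply,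
    PiLp.inner_apply, RCLike.inner_apply, conj_trivial]
  rw [← Finset.sum_congr rfl fun x _ => mul_comm (A j x) (v x)]
  rfl

theorem Tmap_rank {n d : ℕ} (A : Matrix (Fin n) (Fin d) ℝ) :
    finrank ℝ (LinearMap.range (Tmap A)) = A.rank := by
  rw [Matrix.rank, Tmap, LinearMap.range_comp, LinearEquiv.range, Submodule.map_top,
    LinearMap.range_comp, LinearEquiv.finrank_map_eq]

theorem infDist_submodule {d : ℕ} (x : EuclideanSpace ℝ (Fin d))
    (S : Submodule ℝ (EuclideanSpace ℝ (Fin d))) :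
    Metric.infDist x (S : Set (EuclideanSpace ℝ (Fin d)))
      = ‖x - orthogonalProjection S x‖ := by
  rw [Metric.infDist_eq_iInf, ← starProjection_apply, starProjection_minimal]
  congr 1

theorem muRow_normal {d : ℕ} (x v : EuclideanSpace ℝ (Fin d)) (hv : ‖v‖ = 1) :
    muRow x (ℝ ∙ v)ᗮ = ⟪v, x⟫ ^ 2 := by
  rw [muRow, infDist_submodule]
  have h2 : x - (orthogonalProjection (ℝ ∙ v)ᗮ x : EuclideanSpace ℝ (Fin d))
      = (orthogonalProjection (ℝ ∙ v) x : EuclideanSpace ℝ (Fin d)) := by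
    rw [← starProjection_apply, ← starProjection_apply, starProjection_orthogonal_val, sub_sub_cancel]
  rw [h2, ← starProjection_apply, starProjection_unit_singleton ℝ hv]
  simp [norm_smul, hv, sq_abs]

theorem norm_sq_eucl {m : ℕ} (y : EuclideanSpace ℝ (Fin m)) : ‖y‖ ^ 2 = ∑ i, y i ^ 2 := by
  rw [← real_inner_self_eq_norm_sq]
  rw [PiLp.inner_apply]; simp [sq]

theorem muMat_normal {n d : ℕ} (A : Matrix (Fin n) (Fin d) ℝ)
    (v : EuclideanSpace ℝ (Fin d)) (hv : ‖v‖ = 1) :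
    muMat A (ℝ ∙ v)ᗮ = ‖Tmap A v‖ ^ 2 := by
  rw [muMat, norm_sq_eucl]
  refine Finset.sum_congr rfl fun j _ => ?_
  rw [muRow_normal _ _ hv, Tmap_apply, real_inner_comm]

theorem finrank_perp_span_singleton {d : ℕ} {v : EuclideanSpace ℝ (Fin d)} (hv : v ≠ 0) :
    finrank ℝ (((ℝ ∙ v)ᗮ : Submodule ℝ (EuclideanSpace ℝ (Fin d))) : Type) = d - 1 := by
  have h := Submodule.finrank_add_finrank_orthogonal (K := (ℝ ∙ v))
  rw [finrank_span_singleton hv, finrank_euclideanSpace_fin] at h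
  omega

theorem exists_unit_normal {d : ℕ} (hd : 0 < d) (S : Submodule ℝ (EuclideanSpace ℝ (Fin d)))
    (hS : finrank ℝ S = d - 1) :
    ∃ v : EuclideanSpace ℝ (Fin d), ‖v‖ = 1 ∧ S = (ℝ ∙ v)ᗮ := by
  have h := Submodule.finrank_add_finrank_orthogonal (K := S)
  rw [hS, finrank_euclideanSpace_fin] at h
  have h1 : finrank ℝ Sᗮ = 1 := by omega
  obtain ⟨v₀, hv0, hspan⟩ := finrank_eq_one_iff'.mp h1
  have hv0' : (v₀ : EuclideanSpace ℝ (Fin d)) ≠ 0 := by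
    simpa using fun h => hv0 (Subtype.ext h)
  refine ⟨‖(v₀ : EuclideanSpace ℝ (Fin d))‖⁻¹ • (v₀ : EuclideanSpace ℝ (Fin d)),
    norm_smul_inv_norm hv0', ?_⟩
  have hSperp : Sᗮ = ℝ ∙ ((v₀ : EuclideanSpace ℝ (Fin d))) := by
    apply le_antisymm
    · intro w hw
      obtain ⟨c, hc⟩ := hspan ⟨w, hw⟩
      exact Submodule.mem_span_singleton.mpr ⟨c, by simpa using congrArg Subtype.val hc⟩
    · rw [Submodule.span_le, Set.singleton_subset_iff]; exact v₀.2
  rw [Submodule.span_singleton_smul_eq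
    (isUnit_iff_ne_zero.mpr (inv_ne_zero (norm_ne_zero_iff.mpr hv0'))) _, ← hSperp,
    Submodule.orthogonal_orthogonal]

theorem ratio_mem {n d : ℕ} (A : Matrix (Fin n) (Fin d) ℝ) (i : Fin n)
    (v : EuclideanSpace ℝ (Fin d)) (hv : ‖v‖ = 1) (hTv : Tmap A v ≠ 0) :
    (Tmap A v i ^ 2 / ‖Tmap A v‖ ^ 2) ∈ {t : ℝ | ∃ S : Submodule ℝ (EuclideanSpace ℝ (Fin d)),
      Module.finrank ℝ S = d - 1 ∧ 0 < muMat A S ∧ t = muRow (WithLp.toLp 2 (A i)) S / muMat A S} := by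
  have hv0 : v ≠ 0 := fun h => by simp [h] at hv
  refine ⟨(ℝ ∙ v)ᗮ, finrank_perp_span_singleton hv0, ?_, ?_⟩
  · rw [muMat_normal A v hv]
    have hn : ‖Tmap A v‖ ≠ 0 := norm_ne_zero_iff.mpr hTv
    positivity
  · rw [muMat_normal A v hv, muRow_normal _ _ hv, Tmap_apply, real_inner_comm]

theorem exists_unit_nonzero {n d : ℕ} (A : Matrix (Fin n) (Fin d) ℝ) (hA : A ≠ 0) :
    ∃ v : EuclideanSpace ℝ (Fin d), ‖v‖ = 1 ∧ Tmap A v ≠ 0 := by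
  have hw : ∃ w, Tmap A w ≠ 0 := by
    by_contra h
    push_neg at h
    apply hA
    ext j k
    have h1 : Tmap A (EuclideanSpace.single k 1) j = 0 := by rw [h _]; rfl
    rw [Tmap_apply, EuclideanSpace.inner_single_right] at h1
    simpa using h1
  obtain ⟨w, hw⟩ := hw
  have hw0 : w ≠ 0 := fun h => hw (by simp [h])
  have hnw : ‖w‖ ≠ 0 := norm_ne_zero_iff.mpr hw0
  refine ⟨‖w‖⁻¹ • w, norm_smul_inv_norm hw0, ?_⟩
  rw [_root_.map_smul]
  exact smul_ne_zero (inv_ne_zero hnw) hw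

theorem sens_eq {n d : ℕ} (A : Matrix (Fin n) (Fin d) ℝ) (hA : A ≠ 0) (hd : 0 < d) (i : Fin n) :
    sens A i = ‖(orthogonalProjection (LinearMap.range (Tmap A))
      (EuclideanSpace.single i (1 : ℝ)) : EuclideanSpace ℝ (Fin n))‖ ^ 2 := by
  set U := LinearMap.range (Tmap A) with hU
  set e : EuclideanSpace ℝ (Fin n) := EuclideanSpace.single i (1 : ℝ) with he
  set p : EuclideanSpace ℝ (Fin n) := (orthogonalProjection U e : EuclideanSpace ℝ (Fin n))
    with hp
  have hpU : p ∈ U := SetLike.coe_mem _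
  have hinner : ∀ u ∈ U, ⟪e, u⟫ = ⟪p, u⟫ := by
    intro u hu
    have h0 : ⟪e - p, u⟫ = 0 := starProjection_inner_eq_zero e u hu
    rw [inner_sub_left] at h0
    linarith
  -- upper bound
  have hub : ∀ t ∈ {t : ℝ | ∃ S : Submodule ℝ (EuclideanSpace ℝ (Fin d)),
      Module.finrank ℝ S = d - 1 ∧ 0 < muMat A S ∧ t = muRow (WithLp.toLp 2 (A i)) S / muMat A S},
      t ≤ ‖p‖ ^ 2 := by
    rintro t ⟨S, hS, hpos, rfl⟩
    obtain ⟨v, hv, rfl⟩ := exists_unit_normal hd S hS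
    rw [muMat_normal A v hv] at hpos ⊢
    rw [muRow_normal _ _ hv, real_inner_comm, ← Tmap_apply]
    have hkey : Tmap A v i = ⟪p, Tmap A v⟫ := by
      rw [← hinner (Tmap A v) (LinearMap.mem_range_self _ v), he,
        EuclideanSpace.inner_single_left]
      simp
    rw [hkey, div_le_iff₀ hpos]
    have hcs := real_inner_mul_inner_self_le p (Tmap A v)
    rw [real_inner_self_eq_norm_sq, real_inner_self_eq_norm_sq] at hcs
    nlinarith [hcs]
  -- nonempty with a nonnegative element
  obtain ⟨v₀, hv₀, hTv₀⟩ := exists_unit_nonzero A hA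
  have hmem₀ := ratio_mem A i v₀ hv₀ hTv₀
  have hbdd : BddAbove {t : ℝ | ∃ S : Submodule ℝ (EuclideanSpace ℝ (Fin d)),
      Module.finrank ℝ S = d - 1 ∧ 0 < muMat A S ∧ t = muRow (WithLp.toLp 2 (A i)) S / muMat A S} :=
    ⟨‖p‖ ^ 2, hub⟩
  refine le_antisymm (Real.sSup_le hub (by positivity)) ?_
  by_cases hp0 : p = 0
  · rw [hp0]
    have h0 : (0 : ℝ) ≤ Tmap A v₀ i ^ 2 / ‖Tmap A v₀‖ ^ 2 := by positivity
    calc ‖(0 : EuclideanSpace ℝ (Fin n))‖ ^ 2 = 0 := by simp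
      _ ≤ Tmap A v₀ i ^ 2 / ‖Tmap A v₀‖ ^ 2 := h0
      _ ≤ sens A i := le_csSup hbdd hmem₀
  · have hpU' := hpU
    obtain ⟨w, hw⟩ := hpU'
    have hw0 : w ≠ 0 := fun h => hp0 (by rw [← hw, h, map_zero])
    have hnw : ‖w‖ ≠ 0 := norm_ne_zero_iff.mpr hw0
    set v : EuclideanSpace ℝ (Fin d) := ‖w‖⁻¹ • w with hv
    have hvunit : ‖v‖ = 1 := norm_smul_inv_norm hw0
    have hTv : Tmap A v = ‖w‖⁻¹ • p := by rw [hv, _root_.map_smul, hw]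
    have hTvne : Tmap A v ≠ 0 := by
      rw [hTv]; exact smul_ne_zero (inv_ne_zero hnw) hp0
    have hmem := ratio_mem A i v hvunit hTvne
    have hpi : p i = ‖p‖ ^ 2 := by
      have h := hinner p hpU
      rw [he, EuclideanSpace.inner_single_left, real_inner_self_eq_norm_sq] at h
      simpa using h
    have hval : Tmap A v i ^ 2 / ‖Tmap A v‖ ^ 2 = ‖p‖ ^ 2 := by
      have h1 : Tmap A v i = ‖w‖⁻¹ * p i := by rw [hTv]; rfl
      have h2 : ‖Tmap A v‖ = ‖w‖⁻¹ * ‖p‖ := by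
        rw [hTv, norm_smul]
        simp
      have hpn : ‖p‖ ≠ 0 := norm_ne_zero_iff.mpr hp0
      rw [h1, h2, hpi]
      field_simp
    rw [← hval]
    exact le_csSup hbdd hmem

theorem sum_proj_sq {n : ℕ} (U : Submodule ℝ (EuclideanSpace ℝ (Fin n))) :
    ∑ i, ‖(orthogonalProjection U (EuclideanSpace.single i (1 : ℝ)) :
      EuclideanSpace ℝ (Fin n))‖ ^ 2 = finrank ℝ U := by
  set b := stdOrthonormalBasis ℝ U with hb
  have hP : ∀ x : EuclideanSpace ℝ (Fin n),
      ‖(orthogonalProjection U x : EuclideanSpace ℝ (Fin n))‖ ^ 2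
        = ∑ k, ⟪((b k : EuclideanSpace ℝ (Fin n))), x⟫ ^ 2 := by
    intro x
    have hxp : ⟪x, (orthogonalProjection U x : EuclideanSpace ℝ (Fin n))⟫
        = ‖(orthogonalProjection U x : EuclideanSpace ℝ (Fin n))‖ ^ 2 := by
      have h0 : ⟪x - (orthogonalProjection U x : EuclideanSpace ℝ (Fin n)),
          (orthogonalProjection U x : EuclideanSpace ℝ (Fin n))⟫ = 0 := starProjection_inner_eq_zero x
        (orthogonalProjection U x : EuclideanSpace ℝ (Fin n)) (SetLike.coe_mem _)
      rw [inner_sub_left] at h0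
      rw [← real_inner_self_eq_norm_sq]
      linarith
    rw [← hxp]
    have hsum := b.orthogonalProjectionOnto_apply_eq_sum x
    have hsum' : (orthogonalProjection U x : EuclideanSpace ℝ (Fin n))
        = ∑ k, ⟪((b k : EuclideanSpace ℝ (Fin n))), x⟫ • (b k : EuclideanSpace ℝ (Fin n)) := by
      rw [hsum]
      push_cast [Submodule.coe_sum]
      rfl
    rw [hsum', inner_sum]
    refine Finset.sum_congr rfl fun k _ => ?_
    rw [real_inner_smul_right, real_inner_comm, sq]
  calc ∑ i, ‖(orthogonalProjection U (EuclideanSpace.single i (1 : ℝ)) :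
        EuclideanSpace ℝ (Fin n))‖ ^ 2
      = ∑ i, ∑ k, ⟪((b k : EuclideanSpace ℝ (Fin n))), EuclideanSpace.single i (1 : ℝ)⟫ ^ 2 := by
        exact Finset.sum_congr rfl fun i _ => hP _
    _ = ∑ k, ∑ i, ⟪((b k : EuclideanSpace ℝ (Fin n))), EuclideanSpace.single i (1 : ℝ)⟫ ^ 2 :=
        Finset.sum_comm
    _ = ∑ k : Fin (finrank ℝ U), (1 : ℝ) := by
        refine Finset.sum_congr rfl fun k _ => ?_
        have : ∀ i, ⟪((b k : EuclideanSpace ℝ (Fin n))), EuclideanSpace.single i (1 : ℝ)⟫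
            = (b k : EuclideanSpace ℝ (Fin n)) i := by
          intro i
          rw [EuclideanSpace.inner_single_right]
          simp
        simp_rw [this]
        rw [← norm_sq_eucl]
        have hnb : ‖(b k : EuclideanSpace ℝ (Fin n))‖ = 1 := b.orthonormal.1 k
        rw [hnb]; norm_num
    _ = finrank ℝ U := by simp

/-- The total sensitivity of a nonzero matrix equals its rank. -/
theorem total_sensitivity_eq_rank {n d r : ℕ}
    (A : Matrix (Fin n) (Fin d) ℝ) (hA : A ≠ 0) (hrank : A.rank = r) :
    ∑ i, sens A i = (r : ℝ) := by
  have hd : 0 < d := by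
    rcases Nat.eq_zero_or_pos d with h | h
    · exfalso; apply hA; subst h; ext i j; exact j.elim0
    · exact h
  have h1 : ∀ i, sens A i = ‖(orthogonalProjection (LinearMap.range (Tmap A))
      (EuclideanSpace.single i (1 : ℝ)) : EuclideanSpace ℝ (Fin n))‖ ^ 2 :=
    sens_eq A hA hd
  rw [Finset.sum_congr rfl fun i _ => h1 i, sum_proj_sq, Tmap_rank, hrank]
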